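/- If the domain of crossing D = [j0, j1] of two global minimizers x, y is nonempty and bounded, then there is no interval I ⊂ [j0 - r + 1, j1 + r - 1] of length r on which α ≡ 0, and none on which β ≡ 0, where α_i = max(y_i - x_i, 0), β_i = min(y_i - x_i, 0). -/

import Mathlib

open Finset Filter Topology

noncomputable def d1 (f : ℝ → ℝ → ℝ) (ν μ : ℝ) : ℝ := deriv (fun t => f t μ) ν
noncomputable def d2 (f : ℝ → ℝ → ℝ) (ν μ : ℝ) : ℝ := deriv (fun t => f ν t) μ
noncomputable def d11 (f : ℝ → ℝ → ℝ) (ν μ : ℝ) : ℝ := deriv (fun t => d1 f t μ) ν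
noncomputable def d12 (f : ℝ → ℝ → ℝ) (ν μ : ℝ) : ℝ := deriv (fun t => d2 f t μ) ν
noncomputable def d22 (f : ℝ → ℝ → ℝ) (ν μ : ℝ) : ℝ := deriv (fun t => d2 f ν t) μ

/-- The local energy at site `i` of the sequence `z`:  `S_i(z) = ∑_{j=1}^r f_j(z_i, z_{i+j})`. -/
noncomputable def siteE (r : ℕ) (f : ℕ → ℝ → ℝ → ℝ) (z : ℤ → ℝ) (i : ℤ) : ℝ :=
  ∑ j ∈ Finset.Icc 1 r, f j (z i) (z (i + j))

/-- `W_B` for the segment `B = [a,b] ⊂ ℤ`. -/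
noncomputable def Wseg (r : ℕ) (f : ℕ → ℝ → ℝ → ℝ) (a b : ℤ) (z : ℤ → ℝ) : ℝ :=
  ∑ i ∈ Finset.Icc a b, siteE r f z i

/-- A global minimizer: for every segment with interior `[a,b]` and every variation `v`
supported in `[a,b]`, the energy does not decrease. -/
def IsGlobalMin (r : ℕ) (f : ℕ → ℝ → ℝ → ℝ) (x : ℤ → ℝ) : Prop :=
  ∀ a b : ℤ, ∀ v : ℤ → ℝ, (∀ i, v i ≠ 0 → i ∈ Finset.Icc a b) →
    Wseg r f (a - r) b x ≤ Wseg r f (a - r) b (x + v)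

/-- The variational monotone recurrence relation `∑_{j=i-r}^{i} ∂_i S_j(x) = 0` at site `i`. -/
def SolvesEL (r : ℕ) (f : ℕ → ℝ → ℝ → ℝ) (x : ℤ → ℝ) (i : ℤ) : Prop :=
  (∑ j ∈ Finset.Icc 1 r, (d1 (f j) (x i) (x (i + j)) + d2 (f j) (x (i - j)) (x i))) = 0

/-- A local energy of range `r` in the sense of Definition 1.5 of the paper. -/
structure LocalEnergy (r : ℕ) (K lam : ℝ) where
  f : ℕ → ℝ → ℝ → ℝ
  smooth : ∀ j, ContDiff ℝ 2 (fun p : ℝ × ℝ => f j p.1 p.2)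
  periodic : ∀ j ν μ, f j (ν + 1) (μ + 1) = f j ν μ
  bound11 : ∀ j ν μ, |d11 (f j) ν μ| ≤ K / r
  bound12 : ∀ j ν μ, |d12 (f j) ν μ| ≤ K / r
  bound22 : ∀ j ν μ, |d22 (f j) ν μ| ≤ K / r
  coercive : ∀ j ∈ Finset.Icc 1 r, ∀ C : ℝ, ∃ R : ℝ, ∀ ν μ : ℝ, R ≤ |ν - μ| → C ≤ f j ν μ
  twist : ∀ j ∈ Finset.Icc 1 r, ∀ ν μ : ℝ, d12 (f j) ν μ ≤ -lam

/-- `x` and `y` are weakly ordered on the set `s`. -/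
def WOrd (x y : ℤ → ℝ) (s : Set ℤ) : Prop :=
  (∀ i ∈ s, x i ≤ y i) ∨ (∀ i ∈ s, y i ≤ x i)

/-- `D` is an interval outside of which (on both components of the complement)
`x` and `y` are weakly ordered. -/
def CrossProp (x y : ℤ → ℝ) (D : Set ℤ) : Prop :=
  D.OrdConnected ∧ WOrd x y {i | ∀ j ∈ D, i < j} ∧ WOrd x y {i | ∀ j ∈ D, j < i}

/-- The domain of crossing of `x` and `y`: the minimal interval `D` such that `x` and `y`
are weakly ordered on the connected components of its complement. -/
def IsCrossingDomain (x y : ℤ → ℝ) (D : Set ℤ) : Prop :=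
  CrossProp x y D ∧ ∀ D' : Set ℤ, CrossProp x y D' → D ⊆ D'

/-- The translation `(τ_{k,l} x)_i = x_{i-k} + l`. -/
def transl (k l : ℤ) (x : ℤ → ℝ) : ℤ → ℝ := fun i => x (i - k) + l

/-- The Birkhoff property. -/
def Birkhoff (x : ℤ → ℝ) : Prop :=
  ∀ k l : ℤ, (∀ i, transl k l x i ≤ x i) ∨ (∀ i, x i ≤ transl k l x i)


section Aux

variable {r : ℕ} {K lam : ℝ} (E : LocalEnergy r K lam)

lemma sliceDiff2 (j : ℕ) (ν : ℝ) : Differentiable ℝ (fun t => E.f j ν t) := by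
  have h := ((E.smooth j).differentiable two_ne_zero).comp (Differentiable.prodMk (differentiable_const ν) differentiable_id)
  exact h

lemma d2StrictAnti (hlam : 0 < lam) (j : ℕ) (hj : j ∈ Finset.Icc 1 r) (μ : ℝ) :
    StrictAnti (fun ν => d2 (E.f j) ν μ) := by
  apply strictAnti_of_deriv_neg
  intro ν
  have h := E.twist j hj ν μ
  have h2 : d12 (E.f j) ν μ = deriv (fun ν => d2 (E.f j) ν μ) ν := rfl
  rw [h2] at h
  linarith

lemma coreIneq (hlam : 0 < lam) (j : ℕ) (hj : j ∈ Finset.Icc 1 r) {P Q S T : ℝ}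
    (hPQ : Q ≤ P) (hST : S ≤ T) :
    E.f j P T + E.f j Q S ≤ E.f j P S + E.f j Q T := by
  have hdiffP := sliceDiff2 E j P
  have hdiffQ := sliceDiff2 E j Q
  have hanti : Antitone (fun μ => E.f j P μ - E.f j Q μ) := by
    apply antitone_of_deriv_nonpos (hdiffP.sub hdiffQ)
    intro μ
    rw [deriv_sub (hdiffP μ) (hdiffQ μ)]
    have h2 : d2 (E.f j) P μ ≤ d2 (E.f j) Q μ := (d2StrictAnti E hlam j hj μ).antitone hPQ
    exact sub_nonpos.2 h2
  have h3 := hanti hST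
  dsimp only at h3
  linarith

lemma subL (hlam : 0 < lam) (j : ℕ) (hj : j ∈ Finset.Icc 1 r) {P Q S T : ℝ} (hPQ : Q ≤ P) :
    E.f j P (max S T) + E.f j Q (min S T) ≤ E.f j P S + E.f j Q T := by
  rcases le_total T S with h | h
  · rw [max_eq_left h, min_eq_right h]
  · rw [max_eq_right h, min_eq_left h]; exact coreIneq E hlam j hj hPQ h

lemma subR (hlam : 0 < lam) (j : ℕ) (hj : j ∈ Finset.Icc 1 r) {P Q S T : ℝ} (hST : S ≤ T) :
    E.f j (max P Q) T + E.f j (min P Q) S ≤ E.f j P S + E.f j Q T := by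
  rcases le_total Q P with h | h
  · rw [max_eq_left h, min_eq_right h]; exact coreIneq E hlam j hj h hST
  · rw [max_eq_right h, min_eq_left h]; linarith

lemma hasDerivAt_pair (j : ℕ) (c1 c2 ν μ : ℝ) :
    HasDerivAt (fun t => E.f j (ν + c1 * t) (μ + c2 * t))
      (c1 * d1 (E.f j) ν μ + c2 * d2 (E.f j) ν μ) 0 := by
  have hF : DifferentiableAt ℝ (fun p : ℝ × ℝ => E.f j p.1 p.2) (ν, μ) :=
    ((E.smooth j).differentiable two_ne_zero) (ν, μ)
  have hFd := hF.hasFDerivAt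
  have e1 : deriv (fun t => E.f j t μ) ν = fderiv ℝ (fun p : ℝ × ℝ => E.f j p.1 p.2) (ν, μ) (1, 0) := by
    have hin : HasDerivAt (fun t : ℝ => (t, μ)) ((1 : ℝ), (0 : ℝ)) ν :=
      HasDerivAt.prodMk (hasDerivAt_id ν) (hasDerivAt_const ν μ)
    exact (hFd.comp_hasDerivAt ν hin).deriv
  have e2 : deriv (fun t => E.f j ν t) μ = fderiv ℝ (fun p : ℝ × ℝ => E.f j p.1 p.2) (ν, μ) (0, 1) := by
    have hin : HasDerivAt (fun t : ℝ => (ν, t)) ((0 : ℝ), (1 : ℝ)) μ :=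
      HasDerivAt.prodMk (hasDerivAt_const μ ν) (hasDerivAt_id μ)
    exact (hFd.comp_hasDerivAt μ hin).deriv
  have hin0 : HasDerivAt (fun t : ℝ => (ν + c1 * t, μ + c2 * t)) ((c1 : ℝ), (c2 : ℝ)) 0 := by
    have h1 : HasDerivAt (fun t : ℝ => ν + c1 * t) c1 0 := by
      simpa using ((hasDerivAt_id (0 : ℝ)).const_mul c1).const_add ν
    have h2 : HasDerivAt (fun t : ℝ => μ + c2 * t) c2 0 := by
      simpa using ((hasDerivAt_id (0 : ℝ)).const_mul c2).const_add μ
    exact HasDerivAt.prodMk h1 h2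
  have hFd' : HasFDerivAt (fun p : ℝ × ℝ => E.f j p.1 p.2)
      (fderiv ℝ (fun p : ℝ × ℝ => E.f j p.1 p.2) (ν, μ))
      ((fun t : ℝ => (ν + c1 * t, μ + c2 * t)) 0) := by
    simpa using hFd
  have hcomp := hFd'.comp_hasDerivAt 0 hin0
  have hval : fderiv ℝ (fun p : ℝ × ℝ => E.f j p.1 p.2) (ν, μ) (c1, c2)
      = c1 * d1 (E.f j) ν μ + c2 * d2 (E.f j) ν μ := by
    have hvec : ((c1 : ℝ), (c2 : ℝ)) = c1 • ((1 : ℝ), (0 : ℝ)) + c2 • ((0 : ℝ), (1 : ℝ)) := by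
      simp [Prod.ext_iff]
    rw [hvec, map_add, map_smul, map_smul, ← e1, ← e2]
    simp only [smul_eq_mul]
    rfl
  rw [hval] at hcomp
  exact hcomp

lemma globalMin_solvesEL (hr : 1 ≤ r) {x : ℤ → ℝ} (hx : IsGlobalMin r E.f x) (i : ℤ) :
    SolvesEL r E.f x i := by
  classical
  set c : ℤ → ℝ := fun k => if k = i then 1 else 0 with hc
  set g : ℝ → ℝ := fun t => ∑ k ∈ Finset.Icc (i - (r : ℤ)) i, ∑ j ∈ Finset.Icc 1 r,
      E.f j (x k + c k * t) (x (k + (j : ℤ)) + c (k + (j : ℤ)) * t) with hg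
  have key : ∀ (t : ℝ) (k : ℤ), x k + c k * t = (x + fun k => if k = i then t else 0) k := by
    intro t k
    simp only [hc, Pi.add_apply]
    split_ifs <;> ring
  have hgmin : ∀ t, g 0 ≤ g t := by
    intro t
    have hsupp : ∀ k : ℤ, (fun k => if k = i then t else 0) k ≠ 0 → k ∈ Finset.Icc i i := by
      intro k hk
      simp only at hk
      by_cases h : k = i
      · simp [h]
      · simp [h] at hk
    have h := hx i i _ hsupp
    have hW : ∀ s : ℝ, Wseg r E.f (i - r) i (x + fun k => if k = i then s else 0) = g s := by
      intro s
      unfold Wseg siteE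
      exact Finset.sum_congr rfl fun k _ => Finset.sum_congr rfl fun j _ => by
        rw [← key s k, ← key s (k + (j : ℤ))]
    have h0 : Wseg r E.f (i - r) i x = g 0 := by
      rw [← hW 0]
      congr 1
      funext k
      simp
    rw [← hW t, ← h0]
    exact h
  have hgd : HasDerivAt g (∑ k ∈ Finset.Icc (i - (r : ℤ)) i, ∑ j ∈ Finset.Icc 1 r,
      (c k * d1 (E.f j) (x k) (x (k + (j : ℤ))) + c (k + (j : ℤ)) * d2 (E.f j) (x k) (x (k + (j : ℤ))))) 0 := by
    rw [hg]
    apply HasDerivAt.fun_sum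
    intro k _
    apply HasDerivAt.fun_sum
    intro j _
    exact hasDerivAt_pair E j (c k) (c (k + (j : ℤ))) (x k) (x (k + (j : ℤ)))
  have hloc : IsLocalMin g 0 := Filter.Eventually.of_forall hgmin
  have hDval := hloc.deriv_eq_zero
  rw [hgd.deriv] at hDval
  -- now rewrite the sum
  have hsplit : ∀ k ∈ Finset.Icc (i - (r : ℤ)) i, ∀ j ∈ Finset.Icc 1 r,
      c k * d1 (E.f j) (x k) (x (k + (j : ℤ))) + c (k + (j : ℤ)) * d2 (E.f j) (x k) (x (k + (j : ℤ)))
      = (if k = i then d1 (E.f j) (x k) (x (k + (j : ℤ))) else 0)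
        + (if k = i - (j : ℤ) then d2 (E.f j) (x k) (x (k + (j : ℤ))) else 0) := by
    intro k _ j _
    have hiff : (k + (j : ℤ) = i) ↔ (k = i - (j : ℤ)) := by omega
    simp only [hc, hiff]
    split_ifs <;> ring
  rw [Finset.sum_congr rfl (fun k hk => Finset.sum_congr rfl (hsplit k hk))] at hDval
  simp only [Finset.sum_add_distrib] at hDval
  have hA : (∑ k ∈ Finset.Icc (i - (r : ℤ)) i, ∑ j ∈ Finset.Icc 1 r,
        if k = i then d1 (E.f j) (x k) (x (k + (j : ℤ))) else 0)
      = ∑ j ∈ Finset.Icc 1 r, d1 (E.f j) (x i) (x (i + (j : ℤ))) := by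
    have h : ∀ k ∈ Finset.Icc (i - (r : ℤ)) i,
        (∑ j ∈ Finset.Icc 1 r, if k = i then d1 (E.f j) (x k) (x (k + (j : ℤ))) else 0)
        = if k = i then (∑ j ∈ Finset.Icc 1 r, d1 (E.f j) (x k) (x (k + (j : ℤ)))) else 0 := by
      intro k _
      split_ifs <;> simp
    rw [Finset.sum_congr rfl h, Finset.sum_ite_eq' (Finset.Icc (i - (r : ℤ)) i) i, if_pos]
    exact Finset.mem_Icc.2 ⟨by omega, le_rfl⟩
  have hB : (∑ k ∈ Finset.Icc (i - (r : ℤ)) i, ∑ j ∈ Finset.Icc 1 r,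
        if k = i - (j : ℤ) then d2 (E.f j) (x k) (x (k + (j : ℤ))) else 0)
      = ∑ j ∈ Finset.Icc 1 r, d2 (E.f j) (x (i - (j : ℤ))) (x i) := by
    rw [Finset.sum_comm]
    apply Finset.sum_congr rfl
    intro j hj
    have hj' := Finset.mem_Icc.1 hj
    rw [Finset.sum_ite_eq' (Finset.Icc (i - (r : ℤ)) i) (i - (j : ℤ)), if_pos
      (Finset.mem_Icc.2 ⟨by omega, by omega⟩)]
    have h2 : i - (j : ℤ) + (j : ℤ) = i := by ring
    rw [h2]
  rw [hA, hB] at hDval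
  unfold SolvesEL
  rw [Finset.sum_add_distrib]
  exact hDval

lemma propagate (hlam : 0 < lam) (hr : 1 ≤ r) {z w : ℤ → ℝ}
    (hz : ∀ i, SolvesEL r E.f z i) (hw : ∀ i, SolvesEL r E.f w i)
    (c : ℤ) (hag : ∀ i, c ≤ i → z i = w i) : ∀ i, z i = w i := by
  have hrmem : r ∈ Finset.Icc 1 r := Finset.mem_Icc.2 ⟨hr, le_rfl⟩
  have key : ∀ n : ℕ, ∀ i : ℤ, c - n ≤ i → z i = w i := by
    intro n
    induction n with
    | zero => intro i hi; exact hag i (by omega)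
    | succ n ih =>
      intro i hi
      rcases le_or_gt (c - (n : ℤ)) i with h | h
      · exact ih i h
      have hag' : ∀ s : ℤ, i + 1 ≤ s → z s = w s := fun s hs => ih s (by omega)
      have hz' := hz (i + (r : ℤ))
      have hw' := hw (i + (r : ℤ))
      unfold SolvesEL at hz' hw'
      set Fz : ℕ → ℝ := fun j => (d1 (E.f j) (z (i + (r : ℤ))) (z (i + (r : ℤ) + (j : ℤ)))
          + d2 (E.f j) (z (i + (r : ℤ) - (j : ℤ))) (z (i + (r : ℤ))))
          - (d1 (E.f j) (w (i + (r : ℤ))) (w (i + (r : ℤ) + (j : ℤ)))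
          + d2 (E.f j) (w (i + (r : ℤ) - (j : ℤ))) (w (i + (r : ℤ)))) with hFz
    
      have hzero : ∑ j ∈ Finset.Icc 1 r, Fz j = 0 := by
        rw [hFz, Finset.sum_sub_distrib, hz', hw', sub_zero]
      have hother : ∀ j ∈ Finset.Icc 1 r, j ≠ r → Fz j = 0 := by
        intro j hj hjr
        have hj' := Finset.mem_Icc.1 hj
        rw [hFz]
        simp only
        rw [hag' (i + (r : ℤ)) (by omega), hag' (i + (r : ℤ) + (j : ℤ)) (by omega),
          hag' (i + (r : ℤ) - (j : ℤ)) (by omega)]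
        ring
      have hs := Finset.sum_eq_single_of_mem r hrmem hother
      rw [hzero] at hs
      have hsingle : Fz r = 0 := hs.symm
      rw [hFz] at hsingle
      simp only at hsingle
      rw [hag' (i + (r : ℤ)) (by omega), hag' (i + (r : ℤ) + (r : ℤ)) (by omega)] at hsingle
      have heq : d2 (E.f r) (z (i + (r : ℤ) - (r : ℤ))) (w (i + (r : ℤ)))
          = d2 (E.f r) (w (i + (r : ℤ) - (r : ℤ))) (w (i + (r : ℤ))) := by linarith
      have hinj := (d2StrictAnti E hlam r hrmem (w (i + (r : ℤ)))).injective heq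
      have hii : i + (r : ℤ) - (r : ℤ) = i := by ring
      rw [hii] at hinj
      exact hinj
  intro i
  rcases le_or_gt c i with h | h
  · exact hag i h
  · refine key (c - i).toNat i ?_
    have h2 : ((c - i).toNat : ℤ) = c - i := Int.toNat_of_nonneg (by omega)
    omega

lemma siteE_congr {z z' : ℤ → ℝ} (i : ℤ) (h : ∀ k : ℤ, i ≤ k → k ≤ i + r → z k = z' k) :
    siteE r E.f z i = siteE r E.f z' i := by
  unfold siteE
  apply Finset.sum_congr rfl
  intro j hj
  have hj' := Finset.mem_Icc.1 hj
  rw [h i le_rfl (by omega), h (i + (j : ℤ)) (by omega) (by omega)]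

lemma Wseg_localize {z z' : ℤ → ℝ} {cc dd A B : ℤ} (hA : A ≤ cc) (hB : dd ≤ B)
    (hsupp : ∀ k, z' k ≠ z k → cc ≤ k ∧ k ≤ dd) :
    Wseg r E.f (A - r) B z' - Wseg r E.f (A - r) B z
      = Wseg r E.f (cc - r) dd z' - Wseg r E.f (cc - r) dd z := by
  unfold Wseg
  rw [← Finset.sum_sub_distrib, ← Finset.sum_sub_distrib]
  symm
  apply Finset.sum_subset (Finset.Icc_subset_Icc (by omega) hB)
  intro k hk hk'
  have hk3 : k < cc - (r : ℤ) ∨ dd < k := by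
    by_contra hcon
    push_neg at hcon
    exact hk' (Finset.mem_Icc.2 ⟨hcon.1, hcon.2⟩)
  have hzeq : siteE r E.f z k = siteE r E.f z' k := by
    apply siteE_congr
    intro s hs1 hs2
    by_contra hne
    have := hsupp s (Ne.symm hne)
    omega
  rw [hzeq, sub_self]

lemma globalMin_transfer {x w : ℤ → ℝ} (hx : IsGlobalMin r E.f x) {cc dd : ℤ}
    (hsupp : ∀ k, w k ≠ 0 → cc ≤ k ∧ k ≤ dd)
    (hle : Wseg r E.f (cc - r) dd (x + w) ≤ Wseg r E.f (cc - r) dd x) :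
    IsGlobalMin r E.f (x + w) := by
  have h0 : Wseg r E.f (cc - r) dd x ≤ Wseg r E.f (cc - r) dd (x + w) :=
    hx cc dd w (fun k hk => Finset.mem_Icc.2 (hsupp k hk))
  intro a' b' v' hv'
  have hsupp1 : ∀ k, (w + v') k ≠ 0 → k ∈ Finset.Icc (min a' cc) (max b' dd) := by
    intro k hk
    have hor : w k ≠ 0 ∨ v' k ≠ 0 := by
      by_contra hcon
      push_neg at hcon
      simp [Pi.add_apply, hcon.1, hcon.2] at hk
    rcases hor with h | h
    · have h2 := hsupp k h
      have h3 := min_le_right a' cc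
      have h4 := le_max_right b' dd
      exact Finset.mem_Icc.2 ⟨by omega, by omega⟩
    · have h2 := Finset.mem_Icc.1 (hv' k h)
      have h3 := min_le_left a' cc
      have h4 := le_max_left b' dd
      exact Finset.mem_Icc.2 ⟨by omega, by omega⟩
  have h1 := hx (min a' cc) (max b' dd) (w + v') hsupp1
  have h2 := Wseg_localize (E := E) (z := x) (z' := x + w) (A := min a' cc) (B := max b' dd)
      (min_le_right a' cc) (le_max_right b' dd)
      (fun k hk => hsupp k (by
        intro h0'
        apply hk
        simp [Pi.add_apply, h0']))
  have h3 := Wseg_localize (E := E) (z := x + w) (z' := x + w + v') (A := min a' cc) (B := max b' dd)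
      (cc := a') (dd := b') (min_le_left a' cc) (le_max_left b' dd)
      (fun k hk => by
        have hne : v' k ≠ 0 := by
          intro h0'
          apply hk
          simp [Pi.add_apply, h0']
        exact Finset.mem_Icc.1 (hv' k hne))
  have hassoc : x + w + v' = x + (w + v') := add_assoc x w v'
  rw [hassoc] at h3
  rw [hassoc]
  linarith

end Aux

/-- If the domain of crossing `D = [j0,j1]` of two global minimizers is nonempty and
bounded (normalized so that `x ≤ y` to the left of `j0` and `x ≥ y` to the right of `j1`),
then every subinterval of `[j0-r+1, j1+r-1]` of length `r` contains a site where
`α = max(y - x, 0)` does not vanish and a site where `β = min(y - x, 0)` does not vanish. -/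
theorem stmt12 (r : ℕ) (hr : 1 ≤ r) (K lam : ℝ) (hK : 0 < K) (hlam : 0 < lam)
    (E : LocalEnergy r K lam) (x y : ℤ → ℝ)
    (hx : IsGlobalMin r E.f x) (hy : IsGlobalMin r E.f y)
    (j0 j1 : ℤ) (hj : j0 ≤ j1)
    (hD : IsCrossingDomain x y (Set.Icc j0 j1))
    (hleft : ∀ i : ℤ, i < j0 → x i ≤ y i)
    (hright : ∀ i : ℤ, j1 < i → y i ≤ x i)
    (α β : ℤ → ℝ)
    (hα : ∀ i, α i = max (y i - x i) 0) (hβ : ∀ i, β i = min (y i - x i) 0) :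
    ∀ a : ℤ, Set.Icc a (a + (r : ℤ) - 1) ⊆ Set.Icc (j0 - r + 1) (j1 + r - 1) →
      (∃ i ∈ Set.Icc a (a + (r : ℤ) - 1), α i ≠ 0) ∧
      (∃ i ∈ Set.Icc a (a + (r : ℤ) - 1), β i ≠ 0) := by
  intro a hsub
  set b : ℤ := a + (r : ℤ) - 1 with hbdef
  have hmem1 : a ∈ Set.Icc a (a + (r : ℤ) - 1) := Set.mem_Icc.2 ⟨le_rfl, by omega⟩
  have hmem2 : a + (r : ℤ) - 1 ∈ Set.Icc a (a + (r : ℤ) - 1) := Set.mem_Icc.2 ⟨by omega, le_rfl⟩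
  have h1 := Set.mem_Icc.1 (hsub hmem1)
  have h2 := Set.mem_Icc.1 (hsub hmem2)
  have haj1 : a ≤ j1 := by omega
  have hbj0 : j0 ≤ b := by omega
  constructor
  · -- α part
    by_contra hcon
    push_neg at hcon
    have hyx : ∀ i : ℤ, a ≤ i → i ≤ b → y i ≤ x i := by
      intro i hi1 hi2
      have h := hcon i (Set.mem_Icc.2 ⟨hi1, by omega⟩)
      rw [hα i] at h
      have h3 := le_max_left (y i - x i) (0 : ℝ)
      rw [h] at h3
      linarith
    rcases le_or_gt j1 b with hcase | hcase
    · -- easy case : the band reaches past j1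
      have hcp : CrossProp x y (Set.Iic (a - 1)) := by
        refine ⟨Set.ordConnected_Iic, Or.inl ?_, Or.inr ?_⟩
        · intro i hi
          exfalso
          have h1' := hi (min (i - 1) (a - 1)) (Set.mem_Iic.2 (min_le_right _ _))
          have h2' := min_le_left (i - 1) (a - 1)
          have := lt_of_lt_of_le h1' h2'
          omega
        · intro i hi
          have hai : a - 1 < i := hi (a - 1) (Set.mem_Iic.2 le_rfl)
          rcases le_or_gt i b with h | h
          · exact hyx i (by omega) h
          · exact hright i (by omega)
      have hsub2 := hD.2 _ hcp (Set.mem_Icc.2 ⟨hj, le_rfl⟩)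
      simp only [Set.mem_Iic] at hsub2
      omega
    · -- hard case : b < j1
      have hnw : ¬ WOrd x y {i | ∀ jj ∈ Set.Iic b, jj < i} := by
        intro hw
        have hcp : CrossProp x y (Set.Iic b) := by
          refine ⟨Set.ordConnected_Iic, Or.inl ?_, hw⟩
          intro i hi
          exfalso
          have h1' := hi (min (i - 1) b) (Set.mem_Iic.2 (min_le_right _ _))
          have h2' := min_le_left (i - 1) b
          have := lt_of_lt_of_le h1' h2'
          omega
        have hsub2 := hD.2 _ hcp (Set.mem_Icc.2 ⟨hj, le_rfl⟩)
        simp only [Set.mem_Iic] at hsub2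
        omega
      have hex : ∃ ii : ℤ, b < ii ∧ ii ≤ j1 ∧ x ii < y ii := by
        by_contra hcon2
        push_neg at hcon2
        apply hnw
        refine Or.inr ?_
        intro i hi
        have hbi : b < i := hi b (Set.mem_Iic.2 le_rfl)
        rcases le_or_gt i j1 with h | h
        · exact hcon2 i hbi h
        · exact hright i h
      obtain ⟨is, hbis, hisj1, hxyis⟩ := hex
      set x' : ℤ → ℝ := fun k => if k ≤ b then x k else max (x k) (y k) with hx'def
      set u : ℤ → ℝ := fun k => if k ≤ b then y k else min (x k) (y k) with hudef
      have hx'eval : ∀ k, x' k = if k ≤ b then x k else max (x k) (y k) := fun k => rfl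
      have hueval : ∀ k, u k = if k ≤ b then y k else min (x k) (y k) := fun k => rfl
      have hsx : ∀ k : ℤ, (fun k => x' k - x k) k ≠ 0 → b + 1 ≤ k ∧ k ≤ j1 := by
        intro k hk
        simp only at hk
        constructor
        · by_contra h
          push_neg at h
          apply hk
          rw [hx'eval k, if_pos (by omega)]
          ring
        · by_contra h
          push_neg at h
          apply hk
          rw [hx'eval k, if_neg (by omega), max_eq_left (hright k (by omega))]
          ring
      have hsu : ∀ k : ℤ, (fun k => u k - y k) k ≠ 0 → b + 1 ≤ k ∧ k ≤ j1 := by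
        intro k hk
        simp only at hk
        constructor
        · by_contra h
          push_neg at h
          apply hk
          rw [hueval k, if_pos (by omega)]
          ring
        · by_contra h
          push_neg at h
          apply hk
          rw [hueval k, if_neg (by omega), min_eq_right (hright k (by omega))]
          ring
      have hxw : x + (fun k => x' k - x k) = x' := by
        funext k
        simp only [Pi.add_apply]
        ring
      have hyw : y + (fun k => u k - y k) = u := by
        funext k
        simp only [Pi.add_apply]
        ring
      have hminx : Wseg r E.f (b + 1 - (r : ℤ)) j1 x ≤ Wseg r E.f (b + 1 - (r : ℤ)) j1 x' := by
        have h := hx (b + 1) j1 _ (fun k hk => Finset.mem_Icc.2 (hsx k hk))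
        rw [hxw] at h
        exact h
      have hminy : Wseg r E.f (b + 1 - (r : ℤ)) j1 y ≤ Wseg r E.f (b + 1 - (r : ℤ)) j1 u := by
        have h := hy (b + 1) j1 _ (fun k hk => Finset.mem_Icc.2 (hsu k hk))
        rw [hyw] at h
        exact h
      have hsubm : Wseg r E.f (b + 1 - (r : ℤ)) j1 x' + Wseg r E.f (b + 1 - (r : ℤ)) j1 u ≤
          Wseg r E.f (b + 1 - (r : ℤ)) j1 x + Wseg r E.f (b + 1 - (r : ℤ)) j1 y := by
        unfold Wseg
        rw [← Finset.sum_add_distrib, ← Finset.sum_add_distrib]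
        apply Finset.sum_le_sum
        intro i hi
        have hi' := Finset.mem_Icc.1 hi
        unfold siteE
        rw [← Finset.sum_add_distrib, ← Finset.sum_add_distrib]
        apply Finset.sum_le_sum
        intro j hjmem
        have hj' := Finset.mem_Icc.1 hjmem
        simp only [hx'eval, hueval]
        split_ifs with hc1 hc2 hc2
        · exact le_rfl
        · exact subL E hlam j hjmem (hyx i (by omega) hc1)
        · exact absurd hc2 (by omega)
        · rcases le_total (y i) (x i) with h | h
          · rw [max_eq_left h, min_eq_right h]
            exact subL E hlam j hjmem h
          · rw [max_eq_right h, min_eq_left h,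
              max_comm (x (i + (j : ℤ))) (y (i + (j : ℤ))), min_comm (x (i + (j : ℤ))) (y (i + (j : ℤ)))]
            have hh := subL E hlam j hjmem (S := y (i + (j : ℤ))) (T := x (i + (j : ℤ))) h
            linarith
      have hle : Wseg r E.f (b + 1 - (r : ℤ)) j1 x' ≤ Wseg r E.f (b + 1 - (r : ℤ)) j1 x := by
        linarith
      have hglob : IsGlobalMin r E.f x' := by
        have h := globalMin_transfer E hx (cc := b + 1) (dd := j1) hsx (by rw [hxw]; exact hle)
        rw [hxw] at h
        exact h
      have hELx : ∀ i, SolvesEL r E.f x i := globalMin_solvesEL E hr hx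
      have hELx' : ∀ i, SolvesEL r E.f x' i := globalMin_solvesEL E hr hglob
      have hagree : ∀ i : ℤ, j1 + 1 ≤ i → x i = x' i := by
        intro i hi
        rw [hx'eval i, if_neg (by omega), max_eq_left (hright i (by omega))]
      have hall := propagate E hlam hr hELx hELx' (j1 + 1) hagree
      have hcontr := hall is
      rw [hx'eval is, if_neg (by omega), max_eq_right hxyis.le] at hcontr
      linarith
  · -- β part
    by_contra hcon
    push_neg at hcon
    have hxyI : ∀ i : ℤ, a ≤ i → i ≤ b → x i ≤ y i := by
      intro i hi1 hi2
      have h := hcon i (Set.mem_Icc.2 ⟨hi1, by omega⟩)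
      rw [hβ i] at h
      have h3 := min_le_left (y i - x i) (0 : ℝ)
      rw [h] at h3
      linarith
    rcases le_or_gt a j0 with hcase | hcase
    · -- easy case : the band reaches before j0
      have hcp : CrossProp x y (Set.Ici (b + 1)) := by
        refine ⟨Set.ordConnected_Ici, Or.inl ?_, Or.inl ?_⟩
        · intro i hi
          have hib : i < b + 1 := hi (b + 1) (Set.mem_Ici.2 le_rfl)
          rcases lt_or_ge i j0 with h | h
          · exact hleft i h
          · exact hxyI i (by omega) (by omega)
        · intro i hi
          exfalso
          have h1' := hi (max (i + 1) (b + 1)) (Set.mem_Ici.2 (le_max_right _ _))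
          have h2' := le_max_left (i + 1) (b + 1)
          have := lt_of_le_of_lt h2' h1'
          omega
      have hsub2 := hD.2 _ hcp (Set.mem_Icc.2 ⟨le_rfl, hj⟩)
      simp only [Set.mem_Ici] at hsub2
      omega
    · -- hard case : j0 < a
      have hnw : ¬ WOrd x y {i | ∀ jj ∈ Set.Ici a, i < jj} := by
        intro hw
        have hcp : CrossProp x y (Set.Ici a) := by
          refine ⟨Set.ordConnected_Ici, hw, Or.inl ?_⟩
          intro i hi
          exfalso
          have h1' := hi (max (i + 1) a) (Set.mem_Ici.2 (le_max_right _ _))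
          have h2' := le_max_left (i + 1) a
          have := lt_of_le_of_lt h2' h1'
          omega
        have hsub2 := hD.2 _ hcp (Set.mem_Icc.2 ⟨le_rfl, hj⟩)
        simp only [Set.mem_Ici] at hsub2
        omega
      have hex : ∃ ii : ℤ, j0 ≤ ii ∧ ii < a ∧ y ii < x ii := by
        by_contra hcon2
        push_neg at hcon2
        apply hnw
        refine Or.inl ?_
        intro i hi
        have hia : i < a := hi a (Set.mem_Ici.2 le_rfl)
        rcases lt_or_ge i j0 with h | h
        · exact hleft i h
        · exact hcon2 i h hia
      obtain ⟨is, hj0is, hisa, hyxis⟩ := hex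
      set y'' : ℤ → ℝ := fun k => if k < a then max (x k) (y k) else y k with hy''def
      set u' : ℤ → ℝ := fun k => if k < a then min (x k) (y k) else x k with hu'def
      have hy''eval : ∀ k, y'' k = if k < a then max (x k) (y k) else y k := fun k => rfl
      have hu'eval : ∀ k, u' k = if k < a then min (x k) (y k) else x k := fun k => rfl
      have hsy : ∀ k : ℤ, (fun k => y'' k - y k) k ≠ 0 → j0 ≤ k ∧ k ≤ a - 1 := by
        intro k hk
        simp only at hk
        constructor
        · by_contra h
          push_neg at h
          apply hk
          rw [hy''eval k, if_pos (by omega), max_eq_right (hleft k (by omega))]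
          ring
        · by_contra h
          push_neg at h
          apply hk
          rw [hy''eval k, if_neg (by omega)]
          ring
      have hsu' : ∀ k : ℤ, (fun k => u' k - x k) k ≠ 0 → j0 ≤ k ∧ k ≤ a - 1 := by
        intro k hk
        simp only at hk
        constructor
        · by_contra h
          push_neg at h
          apply hk
          rw [hu'eval k, if_pos (by omega), min_eq_left (hleft k (by omega))]
          ring
        · by_contra h
          push_neg at h
          apply hk
          rw [hu'eval k, if_neg (by omega)]
          ring
      have hyw : y + (fun k => y'' k - y k) = y'' := by
        funext k
        simp only [Pi.add_apply]
        ring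
      have hxw : x + (fun k => u' k - x k) = u' := by
        funext k
        simp only [Pi.add_apply]
        ring
      have hminy : Wseg r E.f (j0 - (r : ℤ)) (a - 1) y ≤ Wseg r E.f (j0 - (r : ℤ)) (a - 1) y'' := by
        have h := hy j0 (a - 1) _ (fun k hk => Finset.mem_Icc.2 (hsy k hk))
        rw [hyw] at h
        exact h
      have hminx : Wseg r E.f (j0 - (r : ℤ)) (a - 1) x ≤ Wseg r E.f (j0 - (r : ℤ)) (a - 1) u' := by
        have h := hx j0 (a - 1) _ (fun k hk => Finset.mem_Icc.2 (hsu' k hk))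
        rw [hxw] at h
        exact h
      have hsubm : Wseg r E.f (j0 - (r : ℤ)) (a - 1) y'' + Wseg r E.f (j0 - (r : ℤ)) (a - 1) u' ≤
          Wseg r E.f (j0 - (r : ℤ)) (a - 1) x + Wseg r E.f (j0 - (r : ℤ)) (a - 1) y := by
        unfold Wseg
        rw [← Finset.sum_add_distrib, ← Finset.sum_add_distrib]
        apply Finset.sum_le_sum
        intro i hi
        have hi' := Finset.mem_Icc.1 hi
        unfold siteE
        rw [← Finset.sum_add_distrib, ← Finset.sum_add_distrib]
        apply Finset.sum_le_sum
        intro j hjmem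
        have hj' := Finset.mem_Icc.1 hjmem
        simp only [hy''eval, hu'eval]
        split_ifs with hc1 hc2 hc2
        · rcases le_total (y i) (x i) with h | h
          · rw [max_eq_left h, min_eq_right h]
            exact subL E hlam j hjmem h
          · rw [max_eq_right h, min_eq_left h,
              max_comm (x (i + (j : ℤ))) (y (i + (j : ℤ))), min_comm (x (i + (j : ℤ))) (y (i + (j : ℤ)))]
            have hh := subL E hlam j hjmem (S := y (i + (j : ℤ))) (T := x (i + (j : ℤ))) h
            linarith
        · exact subR E hlam j hjmem (hxyI (i + (j : ℤ)) (by omega) (by omega))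
        · exact absurd hc1 (by omega)
        · exact absurd hc1 (by omega)
      have hle : Wseg r E.f (j0 - (r : ℤ)) (a - 1) y'' ≤ Wseg r E.f (j0 - (r : ℤ)) (a - 1) y := by
        linarith
      have hglob : IsGlobalMin r E.f y'' := by
        have h := globalMin_transfer E hy (cc := j0) (dd := a - 1) hsy (by rw [hyw]; exact hle)
        rw [hyw] at h
        exact h
      have hELy : ∀ i, SolvesEL r E.f y i := globalMin_solvesEL E hr hy
      have hELy'' : ∀ i, SolvesEL r E.f y'' i := globalMin_solvesEL E hr hglob
      have hagree : ∀ i : ℤ, a ≤ i → y i = y'' i := by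
        intro i hi
        rw [hy''eval i, if_neg (by omega)]
      have hall := propagate E hlam hr hELy hELy'' a hagree
      have hcontr := hall is
      rw [hy''eval is, if_pos hisa, max_eq_left hyxis.le] at hcontr
      linarith
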